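/- Let A be a finite arc set, N a nonempty finite node set with m := |N|, and tail : A → N a map assigning each arc its tail node, such that every node has at least one arc with that tail. Let g_o > 0 and let w : A → [0,∞) satisfy Σ_{a: tail(a)=i} w_a ≤ g_o for every i ∈ N. Define the entropy term χ(w) := Σ_{i∈N} [ Σ_{a: tail(a)=i} w_a ln w_a − (Σ_{a: tail(a)=i} w_a) · ln(Σ_{a: tail(a)=i} w_a) ], with the convention 0·ln 0 = 0. Then |χ(w)| ≤ g_o · m · ln(|A| / m). -/

import Mathlib

open Finset

/-- The entropy term `χ(w) = Σ_{i∈N} [ Σ_{a : tail a = i} w_a ln w_a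
    − (Σ_{a : tail a = i} w_a) ln (Σ_{a : tail a = i} w_a) ]`.
The convention `0 · ln 0 = 0` holds automatically since `Real.log 0 = 0`. -/
noncomputable def entropyTerm {A N : Type*} [Fintype A] [Fintype N] [DecidableEq N]
    (tail : A → N) (w : A → ℝ) : ℝ :=
  ∑ i : N,
    ((∑ a ∈ univ.filter fun a => tail a = i, w a * Real.log (w a))
      - (∑ a ∈ univ.filter fun a => tail a = i, w a)
        * Real.log (∑ a ∈ univ.filter fun a => tail a = i, w a))

/-- Per-group entropy bound: for a nonempty group `s`,
`|Σ w ln w − S ln S| ≤ S ln |s|`. -/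
lemma group_entropy_bound {A : Type*} (s : Finset A) (hs : s.Nonempty)
    (w : A → ℝ) (hw : ∀ a ∈ s, 0 ≤ w a) :
    |(∑ a ∈ s, w a * Real.log (w a)) - (∑ a ∈ s, w a) * Real.log (∑ a ∈ s, w a)|
      ≤ (∑ a ∈ s, w a) * Real.log s.card := by
  set S : ℝ := ∑ a ∈ s, w a with hS
  have hS0 : 0 ≤ S := Finset.sum_nonneg hw
  have hn1 : (1 : ℝ) ≤ s.card := by exact_mod_cast hs.card_pos
  have hn0 : (0 : ℝ) < s.card := lt_of_lt_of_le one_pos hn1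
  have hlogn : 0 ≤ Real.log s.card := Real.log_nonneg hn1
  rcases eq_or_lt_of_le hS0 with h0 | hSpos
  · -- S = 0, so all w a = 0 on s
    have hz : ∀ a ∈ s, w a = 0 := by
      intro a ha
      have := (Finset.sum_eq_zero_iff_of_nonneg hw).mp h0.symm
      exact this a ha
    have h1 : (∑ a ∈ s, w a * Real.log (w a)) = 0 :=
      Finset.sum_eq_zero fun a ha => by rw [hz a ha]; ring
    rw [h1, ← h0]
    simp
  · -- upper bound: Σ w ln w ≤ S ln S
    have hupper : (∑ a ∈ s, w a * Real.log (w a)) ≤ S * Real.log S := by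
      calc (∑ a ∈ s, w a * Real.log (w a)) ≤ ∑ a ∈ s, w a * Real.log S := by
            apply Finset.sum_le_sum
            intro a ha
            rcases eq_or_lt_of_le (hw a ha) with h | h
            · simp [← h]
            · exact mul_le_mul_of_nonneg_left
                (Real.log_le_log h (Finset.single_le_sum hw ha)) (hw a ha)
        _ = S * Real.log S := by rw [← Finset.sum_mul]
    -- lower bound via Jensen for x ↦ x log x
    have hjensen := Real.convexOn_mul_log.map_sum_le (t := s)
      (w := fun _ => (s.card : ℝ)⁻¹) (p := w)
      (fun i _ => by positivity)
      (by rw [Finset.sum_const, nsmul_eq_mul, mul_inv_cancel₀ (ne_of_gt hn0)])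
      (fun i hi => hw i hi)
    have hsum1 : (∑ a ∈ s, (s.card : ℝ)⁻¹ • w a) = S / s.card := by
      rw [← Finset.smul_sum]; simp [div_eq_inv_mul, hS]
    have hsum2 : (∑ a ∈ s, (s.card : ℝ)⁻¹ • (w a * Real.log (w a)))
        = (∑ a ∈ s, w a * Real.log (w a)) / s.card := by
      rw [← Finset.smul_sum]; simp [div_eq_inv_mul]
    rw [hsum1, hsum2] at hjensen
    have hlow : S * Real.log S - S * Real.log s.card
        ≤ ∑ a ∈ s, w a * Real.log (w a) := by
      have := mul_le_mul_of_nonneg_left hjensen hn0.le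
      rw [mul_div_cancel₀ _ (ne_of_gt hn0)] at this
      calc S * Real.log S - S * Real.log s.card
          = (s.card : ℝ) * (S / s.card * Real.log (S / s.card)) := by
            rw [Real.log_div (ne_of_gt hSpos) (ne_of_gt hn0)]
            field_simp
        _ ≤ _ := this
    rw [abs_le]
    constructor
    · linarith
    · have : 0 ≤ S * Real.log s.card := mul_nonneg hS0 hlogn
      linarith

/-- (Lemma 11 of the paper.) If every node is the tail of at least one arc
and the total flow out of each node is at most `g_o`, then the entropy term satisfies
`|χ(w)| ≤ g_o · m · ln(|A|/m)`, where `m = |N|`. -/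
theorem stmt_8 {A N : Type*} [Fintype A] [Fintype N] [DecidableEq N] [Nonempty N]
    (tail : A → N) (htail : ∀ i : N, ∃ a : A, tail a = i)
    (go : ℝ) (hgo : 0 < go)
    (w : A → ℝ) (hw : ∀ a, 0 ≤ w a)
    (hflow : ∀ i : N, ∑ a ∈ univ.filter fun a => tail a = i, w a ≤ go) :
    |entropyTerm tail w|
      ≤ go * (Fintype.card N : ℝ)
          * Real.log ((Fintype.card A : ℝ) / (Fintype.card N : ℝ)) := by
  classical
  set m : ℝ := (Fintype.card N : ℝ) with hm
  have hm0 : (0 : ℝ) < m := by rw [hm]; exact_mod_cast Fintype.card_pos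
  set n : N → ℕ := fun i => (univ.filter fun a => tail a = i).card with hn
  have hnpos : ∀ i : N, 0 < n i := by
    intro i
    obtain ⟨a, ha⟩ := htail i
    exact Finset.card_pos.mpr ⟨a, by simp [ha]⟩
  have hcardA : (Fintype.card A : ℕ) = ∑ i : N, n i := by
    simpa [hn] using Finset.card_eq_sum_card_fiberwise
      (f := tail) (s := univ) (t := univ) (fun x _ => mem_univ _)
  -- per-group bounds
  have hgrp : ∀ i : N,
      |(∑ a ∈ univ.filter fun a => tail a = i, w a * Real.log (w a))
        - (∑ a ∈ univ.filter fun a => tail a = i, w a)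
          * Real.log (∑ a ∈ univ.filter fun a => tail a = i, w a)|
      ≤ go * Real.log (n i) := by
    intro i
    have h1 := group_entropy_bound (univ.filter fun a => tail a = i)
      (Finset.card_pos.mp (hnpos i)) w (fun a _ => hw a)
    refine h1.trans ?_
    exact mul_le_mul_of_nonneg_right (hflow i)
      (Real.log_nonneg (by exact_mod_cast (hnpos i)))
  have habs : |entropyTerm tail w| ≤ ∑ i : N, go * Real.log (n i) :=
    (Finset.abs_sum_le_sum_abs _ _).trans (Finset.sum_le_sum fun i _ => hgrp i)
  -- Jensen for log: Σ log n_i ≤ m log(|A|/m)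
  have hjensen := (strictConcaveOn_log_Ioi.concaveOn).le_map_sum
    (t := (univ : Finset N)) (w := fun _ => m⁻¹) (p := fun i => (n i : ℝ))
    (fun i _ => by positivity)
    (by rw [Finset.sum_const, nsmul_eq_mul, Finset.card_univ, ← hm,
          mul_inv_cancel₀ (ne_of_gt hm0)])
    (fun i _ => Set.mem_Ioi.mpr (by exact_mod_cast hnpos i))
  have hsum1 : (∑ i : N, m⁻¹ • ((n i : ℝ))) = (Fintype.card A : ℝ) / m := by
    rw [← Finset.smul_sum]
    have : (∑ i : N, (n i : ℝ)) = (Fintype.card A : ℝ) := by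
      rw [← Nat.cast_sum, ← hcardA]
    rw [this]; simp [div_eq_inv_mul]
  have hsum2 : (∑ i : N, m⁻¹ • Real.log (n i)) = (∑ i : N, Real.log (n i)) / m := by
    rw [← Finset.smul_sum]; simp [div_eq_inv_mul]
  rw [hsum1, hsum2] at hjensen
  have hlogsum : (∑ i : N, Real.log (n i)) ≤ m * Real.log ((Fintype.card A : ℝ) / m) := by
    have := mul_le_mul_of_nonneg_left hjensen hm0.le
    rwa [mul_div_cancel₀ _ (ne_of_gt hm0)] at this
  calc |entropyTerm tail w| ≤ ∑ i : N, go * Real.log (n i) := habs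
    _ = go * ∑ i : N, Real.log (n i) := by rw [Finset.mul_sum]
    _ ≤ go * (m * Real.log ((Fintype.card A : ℝ) / m)) :=
        mul_le_mul_of_nonneg_left hlogsum hgo.le
    _ = go * m * Real.log ((Fintype.card A : ℝ) / m) := by ring
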